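/- arXiv:1001.1083 — 3 statements merged into one kernel-verified Lean document; each statement's English description precedes it below -/
import Mathlib

section
/- Let α and β be distinct positive roots such that every Δ-coordinate of α − β is nonnegative (β ⪯ α). Then there exist p ≥ 1 and simple roots δ₁, …, δ_p ∈ Δ such that β + δ₁ + ⋯ + δ_k ∈ Σ for every k ∈ {1,…,p} and β + δ₁ + ⋯ + δ_p = α (that is, α is reached from β by a chain of simple roots). -/
/-!
Statement 11 (chain lemma). In a (possibly non-reduced) crystallographic root system `Σ`
in a finite-dimensional real inner product space, with base `Δ` (given by a basis `b`
whose vectors are roots and such that the `Δ`-coordinates of every root are all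
nonnegative integers or all nonpositive integers), if `α ≠ β` are positive roots with
`β ⪯ α` (all `Δ`-coordinates of `α − β` nonnegative), then `α` is reached from `β` by a
chain of simple roots: there are simple roots `δ₁,…,δ_p` with
`β + δ₁ + ⋯ + δ_k ∈ Σ` for each `k` and `β + δ₁ + ⋯ + δ_p = α`.
-/

open scoped RealInnerProductSpace

section Aux

set_option linter.unusedSectionVars false

variable {V : Type*} [NormedAddCommGroup V] [InnerProductSpace ℝ V]

lemma chain_inner_self_pos {x : V} (hx : x ≠ 0) : 0 < ⟪x, x⟫ := by
  rcases lt_or_eq_of_le (real_inner_self_nonneg (x := x)) with h | h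
  · exact h
  · exact absurd (real_inner_self_nonpos.mp (le_of_eq h.symm)) hx

/-- The root system is symmetric under negation. -/
lemma chain_aux_neg (Sig : Set V) (h0 : (0 : V) ∉ Sig)
    (hcrys : ∀ α ∈ Sig, ∀ β ∈ Sig, ∃ n : ℤ,
      2 * ⟪β, α⟫ = (n : ℝ) * ⟪α, α⟫ ∧ β - (n : ℝ) • α ∈ Sig)
    {γ : V} (hγ : γ ∈ Sig) : -γ ∈ Sig := by
  obtain ⟨n, hn, hmem⟩ := hcrys γ hγ γ hγ
  have hγ0 : γ ≠ 0 := by rintro rfl; exact h0 hγ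
  have hip : 0 < ⟪γ, γ⟫ := chain_inner_self_pos hγ0
  have hn2 : (n : ℝ) = 2 := by nlinarith
  have : γ - (n : ℝ) • γ = -γ := by rw [hn2]; module
  rwa [this] at hmem

/-- If `α ≠ γ` are roots with positive inner product, then `α - γ` is a root. -/
lemma chain_aux_sub (Sig : Set V) (h0 : (0 : V) ∉ Sig)
    (hcrys : ∀ α ∈ Sig, ∀ β ∈ Sig, ∃ n : ℤ,
      2 * ⟪β, α⟫ = (n : ℝ) * ⟪α, α⟫ ∧ β - (n : ℝ) • α ∈ Sig)
    {α γ : V} (hα : α ∈ Sig) (hγ : γ ∈ Sig) (hne : α ≠ γ)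
    (hip : 0 < ⟪α, γ⟫) : α - γ ∈ Sig := by
  have hα0 : α ≠ 0 := by rintro rfl; exact h0 hα
  have hγ0 : γ ≠ 0 := by rintro rfl; exact h0 hγ
  have hαα : 0 < ⟪α, α⟫ := chain_inner_self_pos hα0
  have hγγ : 0 < ⟪γ, γ⟫ := chain_inner_self_pos hγ0
  have hsymm : ⟪γ, α⟫ = ⟪α, γ⟫ := real_inner_comm α γ
  obtain ⟨k, hk, hkmem⟩ := hcrys γ hγ α hα
  obtain ⟨n, hn, hnmem⟩ := hcrys α hα γ hγ
  -- `hk : 2 * ⟪α, γ⟫ = k * ⟪γ, γ⟫`, `hkmem : α - k • γ ∈ Sig`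
  -- `hn : 2 * ⟪γ, α⟫ = n * ⟪α, α⟫`, `hnmem : γ - n • α ∈ Sig`
  have hkpos : 0 < (k : ℝ) := by nlinarith
  have hnpos : 0 < (n : ℝ) := by nlinarith
  have hk0 : (0 : ℤ) < k := by exact_mod_cast hkpos
  have hn0 : (0 : ℤ) < n := by exact_mod_cast hnpos
  have hk1 : 1 ≤ k := hk0
  have hn1 : 1 ≤ n := hn0
  rcases eq_or_lt_of_le hk1 with hk1' | hk2
  · -- k = 1 : α - γ ∈ Sig directly
    have : (k : ℝ) = 1 := by exact_mod_cast hk1'.symm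
    rwa [this, one_smul] at hkmem
  · rcases eq_or_lt_of_le hn1 with hn1' | hn2
    · -- n = 1 : γ - α ∈ Sig, negate
      have : (n : ℝ) = 1 := by exact_mod_cast hn1'.symm
      rw [this, one_smul] at hnmem
      have := chain_aux_neg Sig h0 hcrys hnmem
      rwa [neg_sub] at this
    · -- k ≥ 2 and n ≥ 2 : contradiction
      exfalso
      have hk2' : (2 : ℝ) ≤ (k : ℝ) := by exact_mod_cast hk2
      have hn2' : (2 : ℝ) ≤ (n : ℝ) := by exact_mod_cast hn2
      have h1 : ⟪γ, γ⟫ ≤ ⟪α, γ⟫ := by nlinarith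
      have h2 : ⟪α, α⟫ ≤ ⟪α, γ⟫ := by nlinarith
      have hexp : ⟪α - γ, α - γ⟫ = ⟪α, α⟫ - 2 * ⟪α, γ⟫ + ⟪γ, γ⟫ :=
        real_inner_sub_sub_self α γ
      have hne' : α - γ ≠ 0 := sub_ne_zero.mpr hne
      have : 0 < ⟪α - γ, α - γ⟫ := chain_inner_self_pos hne'
      nlinarith

lemma chain_filter_le_zero_sum {p : ℕ} (f : Fin (p + 1) → V) :
    ∑ l ∈ Finset.univ.filter (· ≤ (0 : Fin (p + 1))), f l = f 0 := by
  have : Finset.univ.filter (· ≤ (0 : Fin (p + 1))) = {0} := by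
    ext l
    simp [Fin.le_zero_iff]
  rw [this, Finset.sum_singleton]

lemma chain_cons_partial_sum {p : ℕ} (x : V) (d : Fin p → V) (j : Fin p) :
    ∑ l ∈ Finset.univ.filter (· ≤ j.succ), (Fin.cons x d : Fin (p + 1) → V) l
      = x + ∑ l ∈ Finset.univ.filter (· ≤ j), d l := by
  rw [Finset.sum_filter, Finset.sum_filter, Fin.sum_univ_succ]
  simp [Fin.succ_le_succ_iff, Fin.zero_le]

lemma chain_snoc_partial_sum {p : ℕ} (x : V) (d : Fin p → V) (j : Fin p) :
    ∑ l ∈ Finset.univ.filter (· ≤ Fin.castSucc j), (Fin.snoc d x : Fin (p + 1) → V) l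
      = ∑ l ∈ Finset.univ.filter (· ≤ j), d l := by
  rw [Finset.sum_filter, Finset.sum_filter, Fin.sum_univ_castSucc]
  have hlast : ¬ (Fin.last p ≤ Fin.castSucc j) :=
    not_le.mpr (Fin.castSucc_lt_last j)
  simp [Fin.castSucc_le_castSucc_iff, hlast, Fin.snoc_castSucc]

lemma chain_filter_le_last {p : ℕ} :
    Finset.univ.filter (· ≤ Fin.last p) = (Finset.univ : Finset (Fin (p + 1))) :=
  Finset.filter_true_of_mem (fun x _ => Fin.le_last x)

/-- Roots with nonnegative coordinates have natural-number coordinates. -/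
lemma chain_nat_coords {ι : Type*} [Fintype ι] (Sig : Set V) (h0 : (0 : V) ∉ Sig)
    (b : Module.Basis ι ℝ V)
    (hint : ∀ γ ∈ Sig, (∀ i, ∃ m : ℕ, b.repr γ i = (m : ℝ)) ∨
      (∀ i, ∃ m : ℕ, b.repr γ i = -(m : ℝ)))
    {γ : V} (hγ : γ ∈ Sig) (hpos : ∀ i, 0 ≤ b.repr γ i) :
    ∃ m : ι → ℕ, ∀ i, b.repr γ i = (m i : ℝ) := by
  rcases hint γ hγ with h | h
  · exact ⟨fun i => (h i).choose, fun i => (h i).choose_spec⟩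
  · exfalso
    apply h0
    have hzero : γ = 0 := by
      have : ∀ i, b.repr γ i = 0 := by
        intro i
        obtain ⟨m, hm⟩ := h i
        have h1 := hpos i
        have h2 : b.repr γ i ≤ 0 := by rw [hm]; simp
        linarith
      have : b.repr γ = 0 := Finsupp.ext this
      simpa using congrArg b.repr.symm this
    rwa [hzero] at hγ

/-- Main induction for the chain lemma. -/
lemma chain_main {ι : Type*} [Fintype ι] (Sig : Set V) (h0 : (0 : V) ∉ Sig)
    (hcrys : ∀ α ∈ Sig, ∀ β ∈ Sig, ∃ n : ℤ,
      2 * ⟪β, α⟫ = (n : ℝ) * ⟪α, α⟫ ∧ β - (n : ℝ) • α ∈ Sig)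
    (b : Module.Basis ι ℝ V) (hb : ∀ i, b i ∈ Sig)
    (hint : ∀ γ ∈ Sig, (∀ i, ∃ m : ℕ, b.repr γ i = (m : ℝ)) ∨
      (∀ i, ∃ m : ℕ, b.repr γ i = -(m : ℝ))) :
    ∀ N : ℕ, ∀ α β : V, α ∈ Sig → β ∈ Sig → α ≠ β →
      (∀ i, 0 ≤ b.repr α i) → (∀ i, 0 ≤ b.repr β i) →
      (∀ i, 0 ≤ b.repr (α - β) i) →
      ((N : ℝ) = ∑ i, b.repr (α - β) i) →
      ∃ (p : ℕ) (_ : 0 < p) (d : Fin p → V),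
        (∀ k, ∃ i, d k = b i) ∧
        (∀ k : Fin p, β + ∑ l ∈ Finset.univ.filter (· ≤ k), d l ∈ Sig) ∧
        β + ∑ l, d l = α := by
  intro N
  induction N using Nat.strong_induction_on with
  | _ N IH =>
  intro α β hα hβ hαβ hαpos hβpos hle hN
  classical
  -- nonzero difference
  have hαβ0 : α - β ≠ 0 := sub_ne_zero.mpr hαβ
  have hipd : 0 < ⟪α - β, α - β⟫ := chain_inner_self_pos hαβ0
  -- find i with c_i > 0 and ⟪b i, α - β⟫ > 0
  have hrepr : α - β = ∑ i, b.repr (α - β) i • b i := (b.sum_repr (α - β)).symm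
  have hsum : ⟪α - β, α - β⟫ = ∑ i, b.repr (α - β) i * ⟪b i, α - β⟫ := by
    nth_rewrite 1 [hrepr]
    rw [sum_inner]
    refine Finset.sum_congr rfl fun j _ => ?_
    rw [real_inner_smul_left]
  obtain ⟨i, hi⟩ : ∃ i, 0 < b.repr (α - β) i ∧ 0 < ⟪b i, α - β⟫ := by
    by_contra hcon
    push_neg at hcon
    have : ∀ j ∈ Finset.univ, b.repr (α - β) j * ⟪b j, α - β⟫ ≤ 0 := by
      intro j _
      rcases lt_or_eq_of_le (hle j) with hj | hj
      · exact mul_nonpos_of_nonneg_of_nonpos (le_of_lt hj) (hcon j hj)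
      · rw [← hj, zero_mul]
    have := Finset.sum_nonpos this
    rw [← hsum] at this
    linarith
  obtain ⟨hci, hipi⟩ := hi
  -- integrality: coordinates of α and β are naturals
  obtain ⟨m, hm⟩ := chain_nat_coords Sig h0 b hint hα hαpos
  obtain ⟨n, hn⟩ := chain_nat_coords Sig h0 b hint hβ hβpos
  have hcoord : ∀ j, b.repr (α - β) j = (m j : ℝ) - (n j : ℝ) := by
    intro j; rw [map_sub, Finsupp.sub_apply, hm, hn]
  have hmn : ∀ j, n j ≤ m j := by
    intro j
    have h := hle j
    rw [hcoord j] at h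
    have h2 : (n j : ℝ) ≤ (m j : ℝ) := by linarith
    exact_mod_cast h2
  have hmi : n i < m i := by
    have h := hci
    rw [hcoord i] at h
    have h2 : (n i : ℝ) < (m i : ℝ) := by linarith
    exact_mod_cast h2
  have hci1 : (1 : ℝ) ≤ b.repr (α - β) i := by
    rw [hcoord i]
    have : (n i : ℝ) + 1 ≤ (m i : ℝ) := by exact_mod_cast hmi
    linarith
  -- height is at least 1
  have hN1 : 1 ≤ N := by
    by_contra hcon
    push_neg at hcon
    interval_cases N
    have hsum0 : (0 : ℝ) = ∑ j, b.repr (α - β) j := by exact_mod_cast hN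
    have : b.repr (α - β) i ≤ 0 := by
      have hrest : ∀ j ∈ Finset.univ \ {i}, 0 ≤ b.repr (α - β) j := fun j _ => hle j
      have := Finset.sum_le_sum_of_subset_of_nonneg
        (Finset.singleton_subset_iff.mpr (Finset.mem_univ i)) (fun j hj _ => hle j)
      rw [Finset.sum_singleton] at this
      linarith [hsum0, this]
    linarith
  -- the sum of coordinates of a simple root's repr
  have hbrepr : ∀ j, b.repr (b i) j = if i = j then (1 : ℝ) else 0 := by
    intro j
    rw [b.repr_self]
    simp [Finsupp.single_apply]
  have hbsum : ∑ j, b.repr (b i) j = 1 := by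
    simp only [hbrepr]
    rw [Finset.sum_ite_eq Finset.univ i (fun _ => (1:ℝ))]
    simp
  have hsubr : ⟪b i, α - β⟫ = ⟪b i, α⟫ - ⟪b i, β⟫ := inner_sub_right _ _ _
  have hinner : ⟪b i, α⟫ - ⟪b i, β⟫ > 0 := by rw [← hsubr]; exact hipi
  by_cases hcase : ⟪β, b i⟫ < 0
  · -- Case 1: β + b i is a root; prepend b i to a chain from β + b i to α.
    have hβne : β ≠ -(b i) := by
      intro hcon
      have h1 := hn i
      rw [hcon] at h1
      have h3 : b.repr (-(b i)) i = -1 := by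
        rw [map_neg, Finsupp.neg_apply, hbrepr i, if_pos rfl]
      rw [h3] at h1
      have h2 : (0 : ℝ) ≤ (n i : ℝ) := Nat.cast_nonneg _
      linarith
    have hnegbi : -(b i) ∈ Sig := chain_aux_neg Sig h0 hcrys (hb i)
    have hipneg : 0 < ⟪β, -(b i)⟫ := by
      rw [inner_neg_right]; linarith
    have hmem : β + b i ∈ Sig := by
      have := chain_aux_sub Sig h0 hcrys hβ hnegbi hβne hipneg
      rwa [sub_neg_eq_add] at this
    set β' := β + b i with hβ'def
    by_cases heq : β' = α
    · -- chain of length one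
      refine ⟨1, one_pos, fun _ => b i, fun _ => ⟨i, rfl⟩, ?_, ?_⟩
      · intro k
        rw [show k = (0 : Fin 1) from Subsingleton.elim k 0,
          chain_filter_le_zero_sum (p := 0) (fun _ => b i)]
        rw [← hβ'def, heq]; exact hα
      · rw [Fin.sum_univ_one, ← hβ'def, heq]
    · -- recurse
      have hβ'pos : ∀ j, 0 ≤ b.repr β' j := by
        intro j
        have hdd : b.repr β' j = b.repr β j + b.repr (b i) j := by
          rw [hβ'def, map_add, Finsupp.add_apply]
        rw [hdd, hbrepr]
        by_cases hij : i = j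
        · rw [if_pos hij]; linarith [hβpos j]
        · rw [if_neg hij, add_zero]; exact hβpos j
      have hdiff : α - β' = (α - β) - b i := by rw [hβ'def]; abel
      have hle' : ∀ j, 0 ≤ b.repr (α - β') j := by
        intro j
        have hdd : b.repr (α - β') j = b.repr (α - β) j - b.repr (b i) j := by
          rw [hdiff, map_sub, Finsupp.sub_apply]
        rw [hdd, hbrepr]
        by_cases hij : i = j
        · subst hij; rw [if_pos rfl]; linarith [hci1]
        · rw [if_neg hij, sub_zero]; exact hle j
      have hN' : ((N - 1 : ℕ) : ℝ) = ∑ j, b.repr (α - β') j := by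
        have hsum' : ∑ j, b.repr (α - β') j
            = (∑ j, b.repr (α - β) j) - ∑ j, b.repr (b i) j := by
          rw [← Finset.sum_sub_distrib]
          refine Finset.sum_congr rfl fun j _ => ?_
          rw [hdiff, map_sub b.repr (α - β) (b i), Finsupp.sub_apply]
        rw [Nat.cast_sub hN1, hsum', ← hN, hbsum]
        norm_num
      obtain ⟨p, hp, d, hd1, hd2, hd3⟩ :=
        IH (N - 1) (by omega) α β' hα hmem (fun h => heq h.symm) hαpos hβ'pos hle' hN'
      refine ⟨p + 1, Nat.succ_pos p, Fin.cons (b i) d, ?_, ?_, ?_⟩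
      · intro k
        refine Fin.cases ?_ ?_ k
        · exact ⟨i, rfl⟩
        · intro j; simpa using hd1 j
      · intro k
        refine Fin.cases ?_ ?_ k
        · rw [chain_filter_le_zero_sum]
          simpa using hmem
        · intro j
          rw [chain_cons_partial_sum, ← add_assoc, ← hβ'def]
          exact hd2 j
      · rw [Fin.sum_cons, ← add_assoc, ← hβ'def]
        exact hd3
  · -- Case 2: ⟪α, b i⟫ > 0; α - b i is a root; append b i to a chain from β to α - b i.
    have hβbi : 0 ≤ ⟪b i, β⟫ := by
      rw [real_inner_comm]; linarith [not_lt.mp hcase]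
    have hipα : 0 < ⟪α, b i⟫ := by
      rw [real_inner_comm]; linarith
    have hαne : α ≠ b i := by
      intro hcon
      -- then β would be 0 or equal to α
      have hm1 : ∀ j, (m j : ℝ) = if i = j then (1 : ℝ) else 0 := by
        intro j; rw [← hm j, hcon, hbrepr]
      have hn0 : ∀ j, j ≠ i → n j = 0 := by
        intro j hj
        have := hle j
        rw [hcoord j, hm1 j, if_neg (fun h => hj h.symm)] at this
        have : (n j : ℝ) ≤ 0 := by linarith
        exact_mod_cast le_antisymm (by exact_mod_cast this) (Nat.zero_le _)
      have hni : n i = 0 := by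
        have := hci
        rw [hcoord i, hm1 i, if_pos rfl] at this
        have h1 : (n i : ℝ) < 1 := by linarith
        have : n i < 1 := by exact_mod_cast h1
        omega
      have : β = 0 := by
        have hrz : ∀ j, b.repr β j = 0 := by
          intro j
          rw [hn j]
          by_cases hij : j = i
          · rw [hij, hni]; simp
          · rw [hn0 j hij]; simp
        have : b.repr β = 0 := Finsupp.ext hrz
        simpa using congrArg b.repr.symm this
      rw [this] at hβ
      exact h0 hβ
    have hmem : α - b i ∈ Sig := chain_aux_sub Sig h0 hcrys hα (hb i) hαne hipα
    set α' := α - b i with hα'def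
    by_cases heq : α' = β
    · -- chain of length one
      refine ⟨1, one_pos, fun _ => b i, fun _ => ⟨i, rfl⟩, ?_, ?_⟩
      · intro k
        rw [show k = (0 : Fin 1) from Subsingleton.elim k 0,
          chain_filter_le_zero_sum (p := 0) (fun _ => b i)]
        have : β + b i = α := by rw [← heq, hα'def]; abel
        rw [this]; exact hα
      · rw [Fin.sum_univ_one, ← heq, hα'def]; abel
    · have hα'pos : ∀ j, 0 ≤ b.repr α' j := by
        intro j
        have hdd : b.repr α' j = b.repr α j - b.repr (b i) j := by
          rw [hα'def, map_sub, Finsupp.sub_apply]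
        rw [hdd, hbrepr]
        by_cases hij : i = j
        · subst hij
          rw [if_pos rfl, hm]
          have h1 : (1 : ℝ) ≤ (m i : ℝ) := by
            exact_mod_cast Nat.one_le_iff_ne_zero.mpr (by omega)
          linarith
        · rw [if_neg hij, sub_zero]; exact hαpos j
      have hdiff : α' - β = (α - β) - b i := by rw [hα'def]; abel
      have hle' : ∀ j, 0 ≤ b.repr (α' - β) j := by
        intro j
        have hdd : b.repr (α' - β) j = b.repr (α - β) j - b.repr (b i) j := by
          rw [hdiff, map_sub, Finsupp.sub_apply]
        rw [hdd, hbrepr]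
        by_cases hij : i = j
        · subst hij; rw [if_pos rfl]; linarith [hci1]
        · rw [if_neg hij, sub_zero]; exact hle j
      have hN' : ((N - 1 : ℕ) : ℝ) = ∑ j, b.repr (α' - β) j := by
        have hsum' : ∑ j, b.repr (α' - β) j
            = (∑ j, b.repr (α - β) j) - ∑ j, b.repr (b i) j := by
          rw [← Finset.sum_sub_distrib]
          refine Finset.sum_congr rfl fun j _ => ?_
          rw [hdiff, map_sub b.repr (α - β) (b i), Finsupp.sub_apply]
        rw [Nat.cast_sub hN1, hsum', ← hN, hbsum]
        norm_num
      obtain ⟨p, hp, d, hd1, hd2, hd3⟩ :=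
        IH (N - 1) (by omega) α' β hmem hβ heq hα'pos hβpos hle' hN'
      refine ⟨p + 1, Nat.succ_pos p, Fin.snoc d (b i), ?_, ?_, ?_⟩
      · intro k
        refine Fin.lastCases ?_ ?_ k
        · rw [Fin.snoc_last]; exact ⟨i, rfl⟩
        · intro j; rw [Fin.snoc_castSucc]; exact hd1 j
      · intro k
        refine Fin.lastCases ?_ ?_ k
        · rw [chain_filter_le_last, Fin.sum_snoc, ← add_assoc, hd3, hα'def]
          have : α - b i + b i = α := by abel
          rw [this]; exact hα
        · intro j
          rw [chain_snoc_partial_sum]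
          exact hd2 j
      · rw [Fin.sum_snoc, ← add_assoc, hd3, hα'def]
        abel

end Aux

theorem chain_lemma
    {V : Type*} [NormedAddCommGroup V] [InnerProductSpace ℝ V] [FiniteDimensional ℝ V]
    (Sig : Set V) (hfin : Sig.Finite) (h0 : (0 : V) ∉ Sig)
    (hspan : Submodule.span ℝ Sig = ⊤)
    (hcrys : ∀ α ∈ Sig, ∀ β ∈ Sig, ∃ n : ℤ,
      2 * ⟪β, α⟫ = (n : ℝ) * ⟪α, α⟫ ∧ β - (n : ℝ) • α ∈ Sig)
    {ι : Type*} [Fintype ι] (b : Module.Basis ι ℝ V)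
    (hb : ∀ i, b i ∈ Sig)
    (hint : ∀ γ ∈ Sig, (∀ i, ∃ m : ℕ, b.repr γ i = (m : ℝ)) ∨
      (∀ i, ∃ m : ℕ, b.repr γ i = -(m : ℝ)))
    (α β : V) (hαβ : α ≠ β)
    (hα : α ∈ Sig) (hαpos : ∀ i, 0 ≤ b.repr α i)
    (hβ : β ∈ Sig) (hβpos : ∀ i, 0 ≤ b.repr β i)
    (hle : ∀ i, 0 ≤ b.repr (α - β) i) :
    ∃ (p : ℕ) (_ : 0 < p) (d : Fin p → V),
      (∀ k, ∃ i, d k = b i) ∧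
      (∀ k : Fin p, β + ∑ l ∈ Finset.univ.filter (· ≤ k), d l ∈ Sig) ∧
      β + ∑ l, d l = α := by
  -- compute the height
  obtain ⟨m, hm⟩ := chain_nat_coords Sig h0 b hint hα hαpos
  obtain ⟨n, hn⟩ := chain_nat_coords Sig h0 b hint hβ hβpos
  have hmn : ∀ j, n j ≤ m j := by
    intro j
    have h := hle j
    rw [map_sub, Finsupp.sub_apply, hm, hn] at h
    have h2 : (n j : ℝ) ≤ (m j : ℝ) := by linarith
    exact_mod_cast h2
  refine chain_main Sig h0 hcrys b hb hint (∑ j, (m j - n j)) α β hα hβ hαβ hαpos hβpos hle ?_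
  rw [Nat.cast_sum]
  apply Finset.sum_congr rfl
  intro j _
  rw [Nat.cast_sub (hmn j), map_sub, Finsupp.sub_apply, hm, hn]
end

section
/- Let ℓ > 2 and consider the root system of type A_ℓ: Σ = {e_i − e_j : 1 ≤ i, j ≤ ℓ+1, i ≠ j} in ℝ^{ℓ+1}, with positive roots Σ₊ = {e_i − e_j : i < j} and simple roots Δ = {e_i − e_{i+1} : 1 ≤ i ≤ ℓ}. Let R ⊆ Σ₊ be a set of Hessenberg type and μ ∈ R a maximal root with shadow S_μ = {α ∈ R : μ − α is a nonnegative integer combination of Δ}. Then S_μ is closed under root addition: if α, β ∈ S_μ and α + β ∈ Σ, then α + β ∈ S_μ. (Hence each shadow spans a nilpotent Iwasawa subalgebra of the nilpotent Iwasawa algebra of a simple Lie algebra with restricted root system A_ℓ.) -/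
/-!
Statement 13. In the root system of type `A_ℓ` (`ℓ > 2`), with roots `e_i − e_j`
(`i ≠ j`) in `ℝ^{ℓ+1}`, positive roots `e_i − e_j` (`i < j`) and simple roots
`δ_k = e_k − e_{k+1}`, if `R` is a Hessenberg-type set of positive roots and `μ ∈ R`
a maximal root, then the shadow
`S_μ = {α ∈ R : μ − α is a nonnegative integer combination of the simple roots}`
is closed under root addition: `α, β ∈ S_μ` and `α + β ∈ Σ` imply `α + β ∈ S_μ`.
-/

lemma sumDelta_apply (n : ℕ) (γ : ℕ → ℝ) (m : Fin (n + 1)) :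
    ((∑ k : Fin n, γ k.val • ((Pi.single k.castSucc 1 : Fin (n + 1) → ℝ) - Pi.single k.succ 1) : Fin (n + 1) → ℝ)) m
      = (if m.val < n then γ m.val else 0) - (if 0 < m.val then γ (m.val - 1) else 0) := by
  rw [Finset.sum_apply]
  have h1 : ∀ k : Fin n,
      ((γ k.val • ((Pi.single k.castSucc 1 : Fin (n + 1) → ℝ) - Pi.single k.succ 1) : Fin (n + 1) → ℝ)) m
        = (if m.val = k.val then γ k.val else 0) - (if m.val = k.val + 1 then γ k.val else 0) := by
    intro k
    simp only [Pi.smul_apply, Pi.sub_apply, Pi.single_apply, smul_eq_mul, Fin.ext_iff,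
      Fin.coe_castSucc, Fin.val_succ]
    split_ifs <;> ring
  rw [Finset.sum_congr rfl fun k _ => h1 k, Finset.sum_sub_distrib]
  congr 1
  · by_cases h : m.val < n
    · rw [if_pos h, Finset.sum_eq_single (⟨m.val, h⟩ : Fin n)]
      · simp
      · intro k _ hk
        rw [if_neg]
        intro hc
        exact hk (Fin.eq_of_val_eq hc.symm)
      · simp
    · rw [if_neg h]
      apply Finset.sum_eq_zero
      intro k _
      rw [if_neg]
      have := k.isLt
      omega
  · by_cases h : 0 < m.val
    · have hm : m.val - 1 < n := by have := m.isLt; omega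
      rw [if_pos h, Finset.sum_eq_single (⟨m.val - 1, hm⟩ : Fin n)]
      · simp only
        rw [if_pos (by omega)]
      · intro k _ hk
        rw [if_neg]
        intro hc
        exact hk (Fin.eq_of_val_eq (show k.val = m.val - 1 by omega))
      · simp
    · rw [if_neg h]
      apply Finset.sum_eq_zero
      intro k _
      rw [if_neg]
      omega

lemma interval_repr (n : ℕ) (u v : Fin (n + 1)) (huv : u.val ≤ v.val) :
    (Pi.single u 1 - Pi.single v 1 : Fin (n + 1) → ℝ)
      = ∑ k : Fin n, (((if u.val ≤ k.val ∧ k.val < v.val then (1 : ℕ) else 0) : ℕ) : ℝ) •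
          ((Pi.single k.castSucc 1 : Fin (n + 1) → ℝ) - Pi.single k.succ 1) := by
  have hre : (∑ k : Fin n, (((if u.val ≤ k.val ∧ k.val < v.val then (1 : ℕ) else 0) : ℕ) : ℝ) •
          ((Pi.single k.castSucc 1 : Fin (n + 1) → ℝ) - Pi.single k.succ 1))
      = ∑ k : Fin n, (fun t => if u.val ≤ t ∧ t < v.val then (1 : ℝ) else 0) k.val •
          ((Pi.single k.castSucc 1 : Fin (n + 1) → ℝ) - Pi.single k.succ 1) := by
    refine Finset.sum_congr rfl fun k _ => ?_
    congr 1
    split_ifs with h <;> simp [h]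
  rw [hre]
  funext m
  rw [sumDelta_apply n (fun t => if u.val ≤ t ∧ t < v.val then (1 : ℝ) else 0) m]
  have hv := v.isLt
  have hm := m.isLt
  simp only [Pi.sub_apply, Pi.single_apply, Fin.ext_iff]
  split_ifs <;> first | omega | norm_num

lemma construct_c (n : ℕ) (a b u w : Fin (n + 1)) (h1 : a.val ≤ u.val) (h2 : u.val ≤ w.val)
    (h3 : w.val ≤ b.val) :
    ∃ c : Fin n → ℕ, (Pi.single a 1 - Pi.single b 1 : Fin (n + 1) → ℝ) - (Pi.single u 1 - Pi.single w 1)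
      = ∑ k : Fin n, (c k : ℝ) • ((Pi.single k.castSucc 1 : Fin (n + 1) → ℝ) - Pi.single k.succ 1) := by
  refine ⟨fun k => (if a.val ≤ k.val ∧ k.val < u.val then 1 else 0) +
      (if w.val ≤ k.val ∧ k.val < b.val then 1 else 0), ?_⟩
  have hsplit : (Pi.single a 1 - Pi.single b 1 : Fin (n + 1) → ℝ) - (Pi.single u 1 - Pi.single w 1)
      = (Pi.single a 1 - Pi.single u 1) + (Pi.single w 1 - Pi.single b 1) := by
    abel
  rw [hsplit, interval_repr n a u h1, interval_repr n w b h3, ← Finset.sum_add_distrib]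
  refine Finset.sum_congr rfl fun k _ => ?_
  rw [Nat.cast_add, add_smul]


lemma extract_bounds (n : ℕ) (a b i j : Fin (n + 1)) (hab : a < b) (hij : i < j)
    (c : Fin n → ℕ)
    (heq : (Pi.single a 1 - Pi.single b 1 : Fin (n + 1) → ℝ) - (Pi.single i 1 - Pi.single j 1)
      = ∑ k : Fin n, (c k : ℝ) • ((Pi.single k.castSucc 1 : Fin (n + 1) → ℝ) - Pi.single k.succ 1)) :
    a.val ≤ i.val ∧ j.val ≤ b.val := by
  have hab' : a.val < b.val := hab
  have hij' : i.val < j.val := hij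
  have hb := b.isLt
  have hj := j.isLt
  set γ : ℕ → ℝ := fun t => if h : t < n then (c ⟨t, h⟩ : ℝ) else 0 with hγ
  have hγ0 : ∀ t, 0 ≤ γ t := by
    intro t
    rw [hγ]
    dsimp only
    split
    · positivity
    · exact le_refl 0
  have hre : (∑ k : Fin n, (c k : ℝ) • ((Pi.single k.castSucc 1 : Fin (n + 1) → ℝ) - Pi.single k.succ 1))
      = ∑ k : Fin n, γ k.val • ((Pi.single k.castSucc 1 : Fin (n + 1) → ℝ) - Pi.single k.succ 1) := by
    refine Finset.sum_congr rfl fun k _ => ?_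
    congr 1
    rw [hγ]
    dsimp only
    rw [dif_pos k.isLt]
  rw [hre] at heq
  have step : ∀ m : Fin (n + 1),
      (((if m.val = a.val then (1:ℝ) else 0) - (if m.val = b.val then (1:ℝ) else 0)) -
        ((if m.val = i.val then (1:ℝ) else 0) - (if m.val = j.val then (1:ℝ) else 0)))
      = (if m.val < n then γ m.val else 0) - (if 0 < m.val then γ (m.val - 1) else 0) := by
    intro m
    have h0 := congrFun heq m
    rw [sumDelta_apply n γ m] at h0
    simpa only [Pi.sub_apply, Pi.single_apply, Fin.ext_iff] using h0
  have hNγ : ∀ t, t < n → γ t =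
      (((if a.val ≤ t then (1:ℝ) else 0) - (if b.val ≤ t then (1:ℝ) else 0)) -
        ((if i.val ≤ t then (1:ℝ) else 0) - (if j.val ≤ t then (1:ℝ) else 0))) := by
    intro t
    induction t with
    | zero =>
      intro h0
      have hs : (((if (0:ℕ) = a.val then (1:ℝ) else 0) - (if (0:ℕ) = b.val then (1:ℝ) else 0)) -
          ((if (0:ℕ) = i.val then (1:ℝ) else 0) - (if (0:ℕ) = j.val then (1:ℝ) else 0)))
          = (if 0 < n then γ 0 else 0) - (if 0 < 0 then γ (0 - 1) else 0) :=
        step ⟨0, by omega⟩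
      rw [if_pos h0, if_neg (lt_irrefl 0), sub_zero] at hs
      rw [← hs]
      split_ifs <;> first | omega | norm_num
    | succ t ih =>
      intro h
      have hs : (((if t + 1 = a.val then (1:ℝ) else 0) - (if t + 1 = b.val then (1:ℝ) else 0)) -
          ((if t + 1 = i.val then (1:ℝ) else 0) - (if t + 1 = j.val then (1:ℝ) else 0)))
          = (if t + 1 < n then γ (t + 1) else 0) - (if 0 < t + 1 then γ t else 0) :=
        step ⟨t + 1, by omega⟩
      rw [if_pos h, if_pos (Nat.succ_pos t)] at hs
      have hgam : γ (t + 1) = γ t +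
          (((if t + 1 = a.val then (1:ℝ) else 0) - (if t + 1 = b.val then (1:ℝ) else 0)) -
            ((if t + 1 = i.val then (1:ℝ) else 0) - (if t + 1 = j.val then (1:ℝ) else 0))) := by
        rw [hs]
        ring
      have hx : ∀ x : ℕ, (if x ≤ t + 1 then (1:ℝ) else 0)
          = (if x ≤ t then (1:ℝ) else 0) + (if t + 1 = x then (1:ℝ) else 0) := by
        intro x
        split_ifs <;> first | omega | norm_num
      rw [hgam, ih (by omega), hx a.val, hx b.val, hx i.val, hx j.val]
      ring
  constructor
  · by_contra hc
    push_neg at hc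
    have hi : i.val < n := by omega
    have h0 := hγ0 i.val
    rw [hNγ i.val hi] at h0
    rw [if_neg (by omega), if_neg (by omega), if_pos le_rfl, if_neg (by omega)] at h0
    norm_num at h0
  · by_contra hc
    push_neg at hc
    have hjn : j.val - 1 < n := by omega
    have h0 := hγ0 (j.val - 1)
    rw [hNγ (j.val - 1) hjn] at h0
    rw [if_pos (show a.val ≤ j.val - 1 by omega), if_pos (show b.val ≤ j.val - 1 by omega),
        if_pos (show i.val ≤ j.val - 1 by omega), if_neg (show ¬ j.val ≤ j.val - 1 by omega)] at h0
    norm_num at h0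

set_option maxHeartbeats 1000000 in
theorem shadow_closed_under_addition_typeA
    (ℓ : ℕ) (hl : 2 < ℓ)
    (e : Fin (ℓ + 1) → (Fin (ℓ + 1) → ℝ)) (he : ∀ i, e i = Pi.single i 1)
    (Sig Pos : Set (Fin (ℓ + 1) → ℝ))
    (hSig : Sig = {v | ∃ i j : Fin (ℓ + 1), i ≠ j ∧ v = e i - e j})
    (hPos : Pos = {v | ∃ i j : Fin (ℓ + 1), i < j ∧ v = e i - e j})
    (R : Set (Fin (ℓ + 1) → ℝ)) (hRPos : R ⊆ Pos)
    (hHess : ∀ α ∈ R, ∀ β ∈ Pos, α - β ∈ Pos → α - β ∈ R)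
    (μ : Fin (ℓ + 1) → ℝ) (hμR : μ ∈ R)
    (hμmax : ∀ γ ∈ Pos, μ + γ ∉ R)
    (Sμ : Set (Fin (ℓ + 1) → ℝ))
    (hSμ : Sμ = {α | α ∈ R ∧ ∃ c : Fin ℓ → ℕ,
      μ - α = ∑ k : Fin ℓ, (c k : ℝ) • (e k.castSucc - e k.succ)}) :
    ∀ α ∈ Sμ, ∀ β ∈ Sμ, α + β ∈ Sig → α + β ∈ Sμ := by
  simp only [he] at hSig hPos hSμ
  subst hSig hPos hSμ
  intro α hα β hβ hsum
  obtain ⟨hαR, cα, hcα⟩ := hα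
  obtain ⟨hβR, cβ, hcβ⟩ := hβ
  obtain ⟨i, j, hij, rfl⟩ := hRPos hαR
  obtain ⟨p, q, hpq, rfl⟩ := hRPos hβR
  obtain ⟨a, b, hab, hμeq⟩ := hRPos hμR
  obtain ⟨x, y, hxy, hxyeq⟩ := hsum
  rw [hμeq] at hcα hcβ
  have hai := extract_bounds ℓ a b i j hab hij cα hcα
  have hap := extract_bounds ℓ a b p q hab hpq cβ hcβ
  have hij' : i.val < j.val := hij
  have hpq' : p.val < q.val := hpq
  have hab' : a.val < b.val := hab
  -- every positive root supported inside [a, b] lies in R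
  have inR : ∀ u w : Fin (ℓ + 1), a.val ≤ u.val → u.val < w.val → w.val ≤ b.val →
      (Pi.single u 1 - Pi.single w 1 : Fin (ℓ + 1) → ℝ) ∈ R := by
    intro u w h1 h2 h3
    have hub : (Pi.single u 1 - Pi.single b 1 : Fin (ℓ + 1) → ℝ) ∈ R := by
      rcases eq_or_lt_of_le h1 with h | h
      · have : u = a := Fin.eq_of_val_eq h.symm
        rw [this, ← hμeq]
        exact hμR
      · have hau : a < u := h
        have h4 : (Pi.single a 1 - Pi.single u 1 : Fin (ℓ + 1) → ℝ) ∈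
            {v | ∃ i j : Fin (ℓ + 1), i < j ∧ v = Pi.single i 1 - Pi.single j 1} :=
          ⟨a, u, hau, rfl⟩
        have hub' : u < b := show u.val < b.val by omega
        have h5 : μ - (Pi.single a 1 - Pi.single u 1) = Pi.single u 1 - Pi.single b 1 := by
          rw [hμeq]; abel
        have h6 := hHess μ hμR _ h4 (by rw [h5]; exact ⟨u, b, hub', rfl⟩)
        rwa [h5] at h6
    rcases eq_or_lt_of_le h3 with h | h
    · have : w = b := Fin.eq_of_val_eq h
      rw [this]
      exact hub
    · have hwb : w < b := h
      have h4 : (Pi.single w 1 - Pi.single b 1 : Fin (ℓ + 1) → ℝ) ∈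
          {v | ∃ i j : Fin (ℓ + 1), i < j ∧ v = Pi.single i 1 - Pi.single j 1} :=
        ⟨w, b, hwb, rfl⟩
      have h5 : (Pi.single u 1 - Pi.single b 1 : Fin (ℓ + 1) → ℝ) -
          (Pi.single w 1 - Pi.single b 1) = Pi.single u 1 - Pi.single w 1 := by abel
      have huw : u < w := show u.val < w.val from h2
      have h6 := hHess _ hub _ h4 (by rw [h5]; exact ⟨u, w, huw, rfl⟩)
      rwa [h5] at h6
  -- the sum being a root forces j = p or q = i
  have hdisj : j = p ∨ q = i := by
    by_contra hcon
    push_neg at hcon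
    obtain ⟨hjp, hqi⟩ := hcon
    have hij2 : i.val ≠ j.val := by omega
    have hpq2 : p.val ≠ q.val := by omega
    have hjp2 : j.val ≠ p.val := fun hh => hjp (Fin.eq_of_val_eq hh)
    have hqi2 : q.val ≠ i.val := fun hh => hqi (Fin.eq_of_val_eq hh)
    have hiq2 : i.val ≠ q.val := hqi2.symm
    have hpj2 : p.val ≠ j.val := hjp2.symm
    have hji2 : j.val ≠ i.val := by omega
    have hqp2 : q.val ≠ p.val := by omega
    have Ei := congrFun hxyeq i
    have Ep := congrFun hxyeq p
    simp only [Pi.add_apply, Pi.sub_apply, Pi.single_apply, Fin.ext_iff, hij2, hiq2, hpj2,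
      hpq2] at Ei Ep
    split_ifs at Ei Ep <;> first | contradiction | omega | ((try norm_num at Ei) <;> norm_num at Ep)
  have goal_mem : ∀ u w : Fin (ℓ + 1), a.val ≤ u.val → u.val < w.val → w.val ≤ b.val →
      (Pi.single u 1 - Pi.single w 1 : Fin (ℓ + 1) → ℝ) ∈
        {α | α ∈ R ∧ ∃ c : Fin ℓ → ℕ,
          μ - α = ∑ k : Fin ℓ, (c k : ℝ) • (Pi.single k.castSucc 1 - Pi.single k.succ 1)} := by
    intro u w h1 h2 h3
    obtain ⟨c, hc⟩ := construct_c ℓ a b u w h1 (le_of_lt h2) h3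
    exact ⟨inR u w h1 h2 h3, c, by rw [hμeq]; exact hc⟩
  rcases hdisj with h | h
  · subst h
    have hsum_eq : (Pi.single i 1 - Pi.single j 1 : Fin (ℓ + 1) → ℝ) +
        (Pi.single j 1 - Pi.single q 1) = Pi.single i 1 - Pi.single q 1 := by abel
    rw [hsum_eq]
    exact goal_mem i q hai.1 (by omega) hap.2
  · subst h
    have hsum_eq : (Pi.single q 1 - Pi.single j 1 : Fin (ℓ + 1) → ℝ) +
        (Pi.single p 1 - Pi.single q 1) = Pi.single p 1 - Pi.single j 1 := by abel
    rw [hsum_eq]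
    exact goal_mem p j hap.1 (by omega) hai.2
end

section
/- Assume ω ∈ Σ₊ is the highest root (α ⪯ ω for every α ∈ Σ₊), and define Σ_{1/2} = {β ∈ Σ₊ \ {ω} : ω − β ∈ Σ} and Σ₀ = {β ∈ Σ₊ \ {ω} : ω − β ∉ Σ}. Then: (i) if β, γ ∈ Σ₀ and β + γ ∈ Σ, then β + γ ∈ Σ₀; (ii) if β ∈ Σ_{1/2}, γ ∈ Σ₀ and β + γ ∈ Σ, then β + γ ∈ Σ_{1/2}; (iii) if β, γ ∈ Σ_{1/2} and β + γ ∈ Σ, then β + γ = ω. (In Lie-algebraic terms: n₍₀₎ = ⊕_{β∈Σ₀} g_β is a subalgebra of the Iwasawa algebra n, and n₍₁/₂₎ ⊕ n₍₁₎ = ⊕_{β∈Σ_{1/2}∪{ω}} g_β is an ideal of n.) -/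
/-!
Statement 16. In a crystallographic root system with base (as in the context), let `ω`
be the highest root, `Σ_{1/2} = {β ∈ Σ₊ \ {ω} : ω − β ∈ Σ}` and
`Σ₀ = {β ∈ Σ₊ \ {ω} : ω − β ∉ Σ}`. Then (i) `Σ₀` is closed under root addition;
(ii) `β ∈ Σ_{1/2}`, `γ ∈ Σ₀`, `β + γ ∈ Σ` imply `β + γ ∈ Σ_{1/2}`;
(iii) `β, γ ∈ Σ_{1/2}` and `β + γ ∈ Σ` imply `β + γ = ω`.
(Lie-algebraically: `n₍₀₎` is a subalgebra of the Iwasawa algebra `n` and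
`n₍₁/₂₎ ⊕ n₍₁₎` is an ideal of `n`.)
-/

open scoped RealInnerProductSpace

theorem highest_root_grading
    {V : Type*} [NormedAddCommGroup V] [InnerProductSpace ℝ V] [FiniteDimensional ℝ V]
    (Sig : Set V) (hfin : Sig.Finite) (h0 : (0 : V) ∉ Sig)
    (hspan : Submodule.span ℝ Sig = ⊤)
    (hcrys : ∀ α ∈ Sig, ∀ β ∈ Sig, ∃ n : ℤ,
      2 * ⟪β, α⟫ = (n : ℝ) * ⟪α, α⟫ ∧ β - (n : ℝ) • α ∈ Sig)
    {ι : Type*} [Fintype ι] (b : Module.Basis ι ℝ V)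
    (hb : ∀ i, b i ∈ Sig)
    (hint : ∀ γ ∈ Sig, (∀ i, ∃ m : ℕ, b.repr γ i = (m : ℝ)) ∨
      (∀ i, ∃ m : ℕ, b.repr γ i = -(m : ℝ)))
    -- positive roots
    (Pos : Set V) (hPos : Pos = {γ | γ ∈ Sig ∧ ∀ i, 0 ≤ b.repr γ i})
    -- `ω` is the highest root
    (ω : V) (hω : ω ∈ Pos) (hhigh : ∀ α ∈ Pos, ∀ i, 0 ≤ b.repr (ω - α) i)
    (Shalf Szero : Set V)
    (hShalf : Shalf = {β | β ∈ Pos ∧ β ≠ ω ∧ ω - β ∈ Sig})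
    (hSzero : Szero = {β | β ∈ Pos ∧ β ≠ ω ∧ ω - β ∉ Sig}) :
    (∀ β ∈ Szero, ∀ γ ∈ Szero, β + γ ∈ Sig → β + γ ∈ Szero) ∧
    (∀ β ∈ Shalf, ∀ γ ∈ Szero, β + γ ∈ Sig → β + γ ∈ Shalf) ∧
    (∀ β ∈ Shalf, ∀ γ ∈ Shalf, β + γ ∈ Sig → β + γ = ω) := by
  subst hPos hShalf hSzero
  have hselfpos : ∀ x : V, x ≠ 0 → (0:ℝ) < ⟪x, x⟫ := fun x hx =>
    lt_of_le_of_ne real_inner_self_nonneg (fun h => hx (inner_self_eq_zero.mp h.symm))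
  obtain ⟨hωSig, hωpos⟩ := hω
  have hω0 : ω ≠ 0 := fun h => h0 (h ▸ hωSig)
  have hωω : (0:ℝ) < ⟪ω, ω⟫ := hselfpos ω hω0
  -- Σ is closed under negation
  have hneg : ∀ α ∈ Sig, -α ∈ Sig := by
    intro α hα
    have hα0 : α ≠ 0 := fun h => h0 (h ▸ hα)
    have hαα : (0:ℝ) < ⟪α, α⟫ := hselfpos α hα0
    obtain ⟨n, hn1, hn2⟩ := hcrys α hα α hα
    have hn : (n:ℝ) = 2 := by
      have h := hn1
      field_simp at h
      nlinarith
    have he : α - (n:ℝ) • α = -α := by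
      rw [hn, two_smul]; abel
    rwa [he] at hn2
  -- ⟪b i, ω⟫ ≥ 0
  have hbiω : ∀ i, 0 ≤ ⟪b i, ω⟫ := by
    intro i
    by_contra hlt
    push_neg at hlt
    have hbi : b i ∈ Sig := hb i
    have hbb : (0:ℝ) < ⟪b i, b i⟫ := hselfpos _ (fun h => h0 (h ▸ hbi))
    obtain ⟨n, hn1, hn2⟩ := hcrys (b i) hbi ω hωSig
    have hc : ⟪ω, b i⟫ < 0 := by rw [real_inner_comm]; exact hlt
    have hnneg : (n:ℝ) < 0 := by nlinarith
    have hnnegz : n < 0 := by exact_mod_cast hnneg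
    have hω'pos : ∀ j, 0 ≤ b.repr (ω - (n:ℝ) • b i) j := by
      intro j
      rcases eq_or_ne i j with rfl | hij
      · have he : b.repr (ω - (n:ℝ) • b i) i = b.repr ω i - (n:ℝ) := by
          simp [map_sub, map_smul, Module.Basis.repr_self]
        rw [he]
        nlinarith [hωpos i]
      · have he : b.repr (ω - (n:ℝ) • b i) j = b.repr ω j := by
          simp [map_sub, map_smul, Module.Basis.repr_self, Finsupp.single_eq_of_ne hij.symm]
        rw [he]
        exact hωpos j
    have hkey := hhigh _ ⟨hn2, hω'pos⟩ i
    have he2 : ω - (ω - (n:ℝ) • b i) = (n:ℝ) • b i := by abel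
    rw [he2] at hkey
    have he3 : b.repr ((n:ℝ) • b i) i = (n:ℝ) := by
      simp [map_smul, Module.Basis.repr_self]
    rw [he3] at hkey
    linarith
  -- nonneg coordinates ⇒ nonneg pairing with ω
  have hinn : ∀ v : V, (∀ i, 0 ≤ b.repr v i) → 0 ≤ ⟪v, ω⟫ := by
    intro v hv
    have hrepr : v = ∑ i, b.repr v i • b i := (b.sum_repr v).symm
    rw [hrepr, sum_inner]
    refine Finset.sum_nonneg fun i _ => ?_
    rw [real_inner_smul_left]
    exact mul_nonneg (hv i) (hbiω i)
  -- uniqueness of k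
  have huniq : ∀ n m : ℤ, (n:ℝ) * ⟪ω,ω⟫ = (m:ℝ) * ⟪ω,ω⟫ → n = m := by
    intro n m h
    have h2 : (n:ℝ) = (m:ℝ) := mul_right_cancel₀ hωω.ne' h
    exact_mod_cast h2
  -- existence of k
  have getk : ∀ α ∈ Sig, ∃ n : ℤ, 2 * ⟪α,ω⟫ = (n:ℝ) * ⟪ω,ω⟫ :=
    fun α hα => (hcrys ω hωSig α hα).imp (fun n h => h.1)
  -- key bound: k ≤ 1 for positive roots ≠ ω
  have hk_le_one : ∀ α, α ∈ Sig → (∀ i, 0 ≤ b.repr α i) → α ≠ ω →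
      ∀ n : ℤ, 2 * ⟪α, ω⟫ = (n:ℝ) * ⟪ω,ω⟫ → n ≤ 1 := by
    intro α hα hαpos hαω n hn
    have hsub : ∀ i, 0 ≤ b.repr (ω - α) i := hhigh α ⟨hα, hαpos⟩
    have h1 : 0 ≤ ⟪ω - α, ω⟫ := hinn _ (fun i => by
      have : b.repr (ω - α) i = b.repr (ω - α) i := rfl
      exact hsub i)
    rw [inner_sub_left] at h1
    have hn2 : (n:ℝ) ≤ 2 := by nlinarith
    have hn2' : n ≤ 2 := by exact_mod_cast hn2
    rcases lt_or_eq_of_le hn2' with h | h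
    · omega
    exfalso
    -- n = 2
    obtain ⟨m, hm1, hm2⟩ := hcrys ω hωSig α hα
    have hmn : m = n := huniq m n (by linarith)
    subst hmn
    rw [h] at hm2
    have hη : ((2:ℤ):ℝ) • ω - α ∈ Sig := by
      have h3 := hneg _ hm2
      have he : -(α - ((2:ℤ):ℝ) • ω) = ((2:ℤ):ℝ) • ω - α := by abel
      rwa [he] at h3
    have hηpos : ∀ j, 0 ≤ b.repr (((2:ℤ):ℝ) • ω - α) j := by
      intro j
      have he : b.repr (((2:ℤ):ℝ) • ω - α) j = b.repr ω j + b.repr (ω - α) j := by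
        simp [map_sub, map_smul]
        push_cast
        ring
      rw [he]
      exact add_nonneg (hωpos j) (hsub j)
    have hkey := hhigh _ ⟨hη, hηpos⟩
    have hzero : ∀ j, b.repr (ω - α) j = 0 := by
      intro j
      have h3 := hkey j
      have he : ω - (((2:ℤ):ℝ) • ω - α) = -(ω - α) := by
        push_cast
        rw [two_smul]; abel
      rw [he] at h3
      simp only [map_neg, Finsupp.neg_apply] at h3
      linarith [hsub j]
    have : ω - α = 0 := by
      have h4 : b.repr (ω - α) = 0 := Finsupp.ext hzero
      exact b.repr.map_eq_zero_iff.mp h4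
    exact hαω (sub_eq_zero.mp this).symm
  -- classical lemma: positive pairing of distinct roots ⇒ difference is a root
  have hL : ∀ α ∈ Sig, ∀ β ∈ Sig, 0 < ⟪α, β⟫ → α ≠ β → α - β ∈ Sig := by
    intro α hα β hβ hpos hne
    have hαα : (0:ℝ) < ⟪α,α⟫ := hselfpos _ (fun h => h0 (h ▸ hα))
    have hββ : (0:ℝ) < ⟪β,β⟫ := hselfpos _ (fun h => h0 (h ▸ hβ))
    obtain ⟨n, hn1, hn2⟩ := hcrys β hβ α hα
    obtain ⟨m, hm1, hm2⟩ := hcrys α hα β hβ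
    have hβα : ⟪β,α⟫ = ⟪α,β⟫ := real_inner_comm α β
    rw [hβα] at hm1
    have hn0 : 0 < (n:ℝ) := by nlinarith
    have hm0 : 0 < (m:ℝ) := by nlinarith
    have hn0' : 1 ≤ n := by exact_mod_cast hn0
    have hm0' : 1 ≤ m := by exact_mod_cast hm0
    have hCS := real_inner_mul_inner_self_le α β
    have h4 : (n:ℝ) * (m:ℝ) * (⟪β,β⟫ * ⟪α,α⟫) = 4 * (⟪α,β⟫ * ⟪α,β⟫) := by
      nlinarith [hn1, hm1]
    have hnm : (n:ℝ) * (m:ℝ) ≤ 4 := by nlinarith [mul_pos hββ hαα]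
    have hnmz : n * m ≤ 4 := by exact_mod_cast hnm
    rcases eq_or_lt_of_le hn0' with h1 | h1
    · rw [← h1] at hn2
      simpa using hn2
    rcases eq_or_lt_of_le hm0' with h2 | h2
    · rw [← h2] at hm2
      have h3 := hneg _ (by simpa using hm2)
      have he : -(β - α) = α - β := by abel
      rwa [he] at h3
    exfalso
    have hn2' : 2 ≤ n := h1
    have hm2' : 2 ≤ m := h2
    have hneq : n = 2 ∧ m = 2 := by constructor <;> nlinarith
    obtain ⟨rfl, rfl⟩ := hneq
    have e1 : ⟪α,β⟫ = ⟪β,β⟫ := by push_cast at hn1; linarith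
    have e2 : ⟪α,β⟫ = ⟪α,α⟫ := by push_cast at hm1; linarith
    have hz : ⟪α - β, α - β⟫ = 0 := by
      rw [inner_sub_left, inner_sub_right, inner_sub_right, hβα]
      linarith
    exact hne (sub_eq_zero.mp (inner_self_eq_zero.mp hz))
  -- k = 1 characterization, forward
  have hchar1 : ∀ α, α ∈ Sig → (∀ i, 0 ≤ b.repr α i) → α ≠ ω → ω - α ∈ Sig →
      ∀ n : ℤ, 2 * ⟪α,ω⟫ = (n:ℝ) * ⟪ω,ω⟫ → n = 1 := by
    intro α hα hαpos hαω hδ n hn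
    have hα0 : α ≠ 0 := fun h => h0 (h ▸ hα)
    have hδω : ω - α ≠ ω := fun h => hα0 (sub_eq_self.mp h)
    have hδpos : ∀ i, 0 ≤ b.repr (ω - α) i := hhigh α ⟨hα, hαpos⟩
    obtain ⟨m, hm1⟩ := getk _ hδ
    rw [inner_sub_left] at hm1
    have hsum : ((n + m : ℤ):ℝ) * ⟪ω,ω⟫ = ((2:ℤ):ℝ) * ⟪ω,ω⟫ := by
      push_cast
      linarith
    have h2 : n + m = 2 := huniq _ _ hsum
    have hle1 : n ≤ 1 := hk_le_one α hα hαpos hαω n hn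
    have hle2 : m ≤ 1 := hk_le_one (ω - α) hδ hδpos hδω m (by rw [inner_sub_left]; linarith)
    omega
  -- k positive ⇒ ω − α ∈ Σ
  have hchar2 : ∀ α ∈ Sig, α ≠ ω → ∀ n : ℤ, 2 * ⟪α,ω⟫ = (n:ℝ) * ⟪ω,ω⟫ → 0 < n →
      ω - α ∈ Sig := by
    intro α hα hαω n hn hn0
    have hc : (0:ℝ) < (n:ℝ) := by exact_mod_cast hn0
    have hp : 0 < ⟪ω, α⟫ := by rw [real_inner_comm]; nlinarith
    exact hL ω hωSig α hα hp (fun h => hαω h.symm)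
  -- k = 0 for elements of Σ₀
  have hzerok : ∀ β, β ∈ Sig → (∀ i, 0 ≤ b.repr β i) → β ≠ ω → ω - β ∉ Sig →
      ∀ n : ℤ, 2 * ⟪β,ω⟫ = (n:ℝ) * ⟪ω,ω⟫ → n = 0 := by
    intro β hβ hβpos hβω hβnot n hn
    have h1 : 0 ≤ ⟪β,ω⟫ := hinn β hβpos
    have h2 : 0 ≤ (n:ℝ) := by nlinarith
    have h3 : 0 ≤ n := by exact_mod_cast h2
    rcases lt_or_eq_of_le h3 with h4 | h4
    · exact absurd (hchar2 β hβ hβω n hn h4) hβnot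
    · omega
  -- coordinates of sums
  have haddpos : ∀ β γ : V, (∀ i, 0 ≤ b.repr β i) → (∀ i, 0 ≤ b.repr γ i) →
      ∀ i, 0 ≤ b.repr (β + γ) i := by
    intro β γ hβ hγ i
    have he : b.repr (β + γ) i = b.repr β i + b.repr γ i := by simp
    rw [he]
    exact add_nonneg (hβ i) (hγ i)
  -- additivity of k
  have haddk : ∀ β γ : V, ∀ p q r : ℤ, 2 * ⟪β,ω⟫ = (p:ℝ) * ⟪ω,ω⟫ →
      2 * ⟪γ,ω⟫ = (q:ℝ) * ⟪ω,ω⟫ → 2 * ⟪β + γ,ω⟫ = (r:ℝ) * ⟪ω,ω⟫ → r = p + q := by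
    intro β γ p q r hp hq hr
    apply huniq
    rw [inner_add_left] at hr
    push_cast
    linarith
  refine ⟨?_, ?_, ?_⟩
  · -- (i)
    rintro β ⟨⟨hβS, hβpos⟩, hβω, hβnot⟩ γ ⟨⟨hγS, hγpos⟩, hγω, hγnot⟩ hσS
    obtain ⟨p, hp⟩ := getk β hβS
    obtain ⟨q, hq⟩ := getk γ hγS
    obtain ⟨r, hr⟩ := getk _ hσS
    have hp0 : p = 0 := hzerok β hβS hβpos hβω hβnot p hp
    have hq0 : q = 0 := hzerok γ hγS hγpos hγω hγnot q hq
    have hr0 : r = 0 := by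
      have h := haddk β γ p q r hp hq hr
      omega
    have hσpos := haddpos β γ hβpos hγpos
    have hσω : β + γ ≠ ω := by
      intro h
      rw [h, hr0] at hr
      push_cast at hr
      nlinarith [hωω]
    refine ⟨⟨hσS, hσpos⟩, hσω, fun hmem => ?_⟩
    have := hchar1 _ hσS hσpos hσω hmem r hr
    omega
  · -- (ii)
    rintro β ⟨⟨hβS, hβpos⟩, hβω, hβhalf⟩ γ ⟨⟨hγS, hγpos⟩, hγω, hγnot⟩ hσS
    obtain ⟨p, hp⟩ := getk β hβS
    obtain ⟨q, hq⟩ := getk γ hγS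
    obtain ⟨r, hr⟩ := getk _ hσS
    have hp1 : p = 1 := hchar1 β hβS hβpos hβω hβhalf p hp
    have hq0 : q = 0 := hzerok γ hγS hγpos hγω hγnot q hq
    have hr1 : r = 1 := by
      have h := haddk β γ p q r hp hq hr
      omega
    have hσpos := haddpos β γ hβpos hγpos
    have hσω : β + γ ≠ ω := by
      intro h
      rw [h, hr1] at hr
      push_cast at hr
      nlinarith [hωω]
    exact ⟨⟨hσS, hσpos⟩, hσω, hchar2 _ hσS hσω r hr (by omega)⟩
  · -- (iii)
    rintro β ⟨⟨hβS, hβpos⟩, hβω, hβhalf⟩ γ ⟨⟨hγS, hγpos⟩, hγω, hγhalf⟩ hσS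
    obtain ⟨p, hp⟩ := getk β hβS
    obtain ⟨q, hq⟩ := getk γ hγS
    obtain ⟨r, hr⟩ := getk _ hσS
    have hp1 : p = 1 := hchar1 β hβS hβpos hβω hβhalf p hp
    have hq1 : q = 1 := hchar1 γ hγS hγpos hγω hγhalf q hq
    have hr2 : r = 2 := by
      have h := haddk β γ p q r hp hq hr
      omega
    by_contra hne
    have hσpos := haddpos β γ hβpos hγpos
    have := hk_le_one _ hσS hσpos hne r hr
    omega
end
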